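/- Let d ≥ 2 and n ≥ d, and let μ be a σ-finite Borel measure on ℝ^d that assigns measure zero to every affine hyperplane (i.e., to every (d−1)-dimensional affine subspace). Then the set of tuples (y_1,…,y_n) ∈ (ℝ^d)^n that fail condition (B1) is a null set for the n-fold product measure μ^{⊗n}. Consequently, if Y_1,…,Y_n are random vectors in ℝ^d whose joint law on (ℝ^d)^n is absolutely continuous with respect to μ^{⊗n}, then Y_1,…,Y_n satisfy (B1) almost surely (and, if n ≥ d+1, they satisfy (A1) almost surely). -/

import Mathlib

open scoped RealInnerProductSpace BigOperators Pointwise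

noncomputable section

/-- The unsigned Stirling numbers of the first kind `⎡n,k⎤`, defined as the coefficients of
the polynomial identity `t (t+1) ⋯ (t+n-1) = ∑ k, ⎡n,k⎤ t^k`. -/
def stirlingFirst (n k : ℕ) : ℕ :=
  (∏ i ∈ Finset.range n, (Polynomial.X + Polynomial.C i : Polynomial ℕ)).coeff k

/-- The B-analogues `B[n,k]` of the Stirling numbers of the first kind, defined as the
coefficients of `(t+1)(t+3)⋯(t+2n-1) = ∑ k, B[n,k] t^k`. -/
def stirlingFirstB (n k : ℕ) : ℕ :=
  (∏ i ∈ Finset.range n, (Polynomial.X + Polynomial.C (2 * i + 1) : Polynomial ℕ)).coeff k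

/-- `D^A(n,d) = 2(⎡n, n-d+1⎤ + ⎡n, n-d+3⎤ + ⋯)`. -/
def DA (n d : ℕ) : ℕ := 2 * ∑ j ∈ Finset.range d, stirlingFirst n (n - d + 1 + 2 * j)

/-- `D^B(n,d) = 2(B[n, n-d+1] + B[n, n-d+3] + ⋯)`. -/
def DB (n d : ℕ) : ℕ := 2 * ∑ j ∈ Finset.range d, stirlingFirstB n (n - d + 1 + 2 * j)

/-- Stirling numbers of the second kind: the number of partitions of `{1,…,n}` into `k`
non-empty subsets. -/
def stirlingSecond (n k : ℕ) : ℕ :=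
  Set.ncard {P : Finset (Finset (Fin n)) |
    P.card = k ∧ (∀ s ∈ P, s.Nonempty) ∧ ∀ i : Fin n, ∃! s, s ∈ P ∧ i ∈ s}

/-- B-analogues of the Stirling numbers of the second kind:
`S_B(n,k) = ∑_{r=k}^n C(n,r) S(r,k) 2^{r-k}`. -/
def stirlingSecondB (n k : ℕ) : ℕ :=
  ∑ r ∈ Finset.Icc k n, Nat.choose n r * stirlingSecond r k * 2 ^ (r - k)

/-- The `i`-th of the `n-1` difference vectors `y_{σ(i)} - y_{σ(i+1)}` (0-indexed). -/
def diffA (d n : ℕ) (y : Fin n → EuclideanSpace ℝ (Fin d)) (σ : Equiv.Perm (Fin n))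
    (i : Fin (n - 1)) : EuclideanSpace ℝ (Fin d) :=
  y (σ ⟨i.val, by have := i.isLt; omega⟩) - y (σ ⟨i.val + 1, by have := i.isLt; omega⟩)

/-- Condition (A1): `n ≥ d+1` and for every permutation `σ`, any `d` of the vectors
`y_{σ(1)}-y_{σ(2)}, …, y_{σ(n-1)}-y_{σ(n)}` are linearly independent. -/
def CondA1 (d n : ℕ) (y : Fin n → EuclideanSpace ℝ (Fin d)) : Prop :=
  d + 1 ≤ n ∧
    ∀ σ : Equiv.Perm (Fin n), ∀ s : Finset (Fin (n - 1)), s.card = d →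
      LinearIndependent ℝ (fun i : s => diffA d n y σ i.1)

/-- A vector of signs `ε ∈ {±1}^n`. -/
def IsSignVec {n : ℕ} (ε : Fin n → ℝ) : Prop := ∀ i, ε i = 1 ∨ ε i = -1

/-- The `i`-th of the `n` vectors `ε_1 y_{σ(1)} - ε_2 y_{σ(2)}, …,
`ε_{n-1} y_{σ(n-1)} - ε_n y_{σ(n)}, ε_n y_{σ(n)}` (0-indexed). -/
def diffB (d n : ℕ) (y : Fin n → EuclideanSpace ℝ (Fin d)) (ε : Fin n → ℝ)
    (σ : Equiv.Perm (Fin n)) (i : Fin n) : EuclideanSpace ℝ (Fin d) :=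
  if h : i.val + 1 < n then
    ε i • y (σ i) - ε ⟨i.val + 1, h⟩ • y (σ ⟨i.val + 1, h⟩)
  else ε i • y (σ i)

/-- Condition (B1): `n ≥ d` and for every sign vector `ε` and permutation `σ`, any `d` of the
vectors `ε_1 y_{σ(1)}-ε_2 y_{σ(2)}, …, ε_{n-1}y_{σ(n-1)}-ε_n y_{σ(n)}, ε_n y_{σ(n)}` are
linearly independent. -/
def CondB1 (d n : ℕ) (y : Fin n → EuclideanSpace ℝ (Fin d)) : Prop :=
  d ≤ n ∧
    ∀ ε : Fin n → ℝ, IsSignVec ε → ∀ σ : Equiv.Perm (Fin n),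
      ∀ s : Finset (Fin n), s.card = d →
        LinearIndependent ℝ (fun i : s => diffB d n y ε σ i.1)

/-- The cone `D^A_σ = {v : ⟨v,y_{σ(1)}⟩ ≤ ⋯ ≤ ⟨v,y_{σ(n)}⟩}`. -/
def ConeA (d n : ℕ) (y : Fin n → EuclideanSpace ℝ (Fin d)) (σ : Equiv.Perm (Fin n)) :
    Set (EuclideanSpace ℝ (Fin d)) :=
  {v | Monotone fun i : Fin n => (⟪v, y (σ i)⟫)}

/-- The Weyl tessellation of type `A_{n-1}`: all cones `D^A_σ` different from `{0}`. -/
def WeylA (d n : ℕ) (y : Fin n → EuclideanSpace ℝ (Fin d)) :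
    Set (Set (EuclideanSpace ℝ (Fin d))) :=
  {C | (∃ σ, C = ConeA d n y σ) ∧ C ≠ {0}}

/-- The cone `D^B_{ε,σ} = {v : ε_1⟨v,y_{σ(1)}⟩ ≤ ⋯ ≤ ε_n⟨v,y_{σ(n)}⟩ ≤ 0}`. -/
def ConeB (d n : ℕ) (y : Fin n → EuclideanSpace ℝ (Fin d)) (ε : Fin n → ℝ)
    (σ : Equiv.Perm (Fin n)) : Set (EuclideanSpace ℝ (Fin d)) :=
  {v | (Monotone fun i : Fin n => ε i * ⟪v, y (σ i)⟫) ∧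
    ∀ i : Fin n, ε i * ⟪v, y (σ i)⟫ ≤ 0}

/-- The Weyl tessellation of type `B_n`: all cones `D^B_{ε,σ}` different from `{0}`. -/
def WeylB (d n : ℕ) (y : Fin n → EuclideanSpace ℝ (Fin d)) :
    Set (Set (EuclideanSpace ℝ (Fin d))) :=
  {C | (∃ ε σ, IsSignVec ε ∧ C = ConeB d n y ε σ) ∧ C ≠ {0}}

/-- The cone `F^A_σ(l_1,…,l_m)` (with the `l_j` being 1-indexed): within the chain
`⟨v,y_{σ(1)}⟩ ≤ ⋯ ≤ ⟨v,y_{σ(n)}⟩` the inequality at a 1-indexed position `i ∉ {l_1,…,l_m}`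
is replaced by an equality. -/
def FaceA (d n : ℕ) (y : Fin n → EuclideanSpace ℝ (Fin d)) (σ : Equiv.Perm (Fin n))
    (m : ℕ) (l : Fin m → ℕ) : Set (EuclideanSpace ℝ (Fin d)) :=
  {v | (Monotone fun i : Fin n => (⟪v, y (σ i)⟫)) ∧
    ∀ (p : ℕ) (hp : p + 1 < n), (∀ j, l j ≠ p + 1) →
      ⟪v, y (σ ⟨p, by omega⟩)⟫ = ⟪v, y (σ ⟨p + 1, hp⟩)⟫}

/-- Admissible break positions for type `A`: `1 ≤ l_1 < ⋯ < l_m ≤ n-1`. -/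
def ValidA (n m : ℕ) (l : Fin m → ℕ) : Prop :=
  StrictMono l ∧ ∀ j, 1 ≤ l j ∧ l j ≤ n - 1

/-- The set `𝓕^A_k(y_1,…,y_n)` of `k`-faces of the Weyl tessellation of type `A_{n-1}`:
all nonzero cones of the form `F^A_σ(l_1,…,l_{n-d+k-1})`. -/
def FacesA (d n k : ℕ) (y : Fin n → EuclideanSpace ℝ (Fin d)) :
    Set (Set (EuclideanSpace ℝ (Fin d))) :=
  {F | (∃ (σ : Equiv.Perm (Fin n)) (l : Fin (n - d + k - 1) → ℕ),
      ValidA n (n - d + k - 1) l ∧ F = FaceA d n y σ (n - d + k - 1) l) ∧ F ≠ {0}}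

/-- The cone `F^B_{ε,σ}(l_1,…,l_m)` (with the `l_j` being 1-indexed): within the chain
`ε_1⟨v,y_{σ(1)}⟩ ≤ ⋯ ≤ ε_n⟨v,y_{σ(n)}⟩ ≤ 0` the inequality at a 1-indexed position
`i ∉ {l_1,…,l_m}` is replaced by an equality; in particular all `⟨v,y_{σ(i)}⟩` with
`i > l_m` vanish. -/
def FaceB (d n : ℕ) (y : Fin n → EuclideanSpace ℝ (Fin d)) (ε : Fin n → ℝ)
    (σ : Equiv.Perm (Fin n)) (m : ℕ) (l : Fin m → ℕ) : Set (EuclideanSpace ℝ (Fin d)) :=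
  {v | (Monotone fun i : Fin n => ε i * ⟪v, y (σ i)⟫) ∧
    (∀ i : Fin n, ε i * ⟪v, y (σ i)⟫ ≤ 0) ∧
    (∀ (p : ℕ) (hp : p + 1 < n), (∀ j, l j ≠ p + 1) →
      ε ⟨p, by omega⟩ * ⟪v, y (σ ⟨p, by omega⟩)⟫ =
        ε ⟨p + 1, hp⟩ * ⟪v, y (σ ⟨p + 1, hp⟩)⟫) ∧
    (∀ (p : ℕ) (hp : p < n), (∀ j, l j ≤ p) → ⟪v, y (σ ⟨p, hp⟩)⟫ = 0)}

/-- Admissible break positions for type `B`: `1 ≤ l_1 < ⋯ < l_m ≤ n`. -/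
def ValidB (n m : ℕ) (l : Fin m → ℕ) : Prop :=
  StrictMono l ∧ ∀ j, 1 ≤ l j ∧ l j ≤ n

/-- The set `𝓕^B_k(y_1,…,y_n)` of `k`-faces of the Weyl tessellation of type `B_n`:
all nonzero cones of the form `F^B_{ε,σ}(l_1,…,l_{n-d+k})`. -/
def FacesB (d n k : ℕ) (y : Fin n → EuclideanSpace ℝ (Fin d)) :
    Set (Set (EuclideanSpace ℝ (Fin d))) :=
  {F | (∃ (ε : Fin n → ℝ) (σ : Equiv.Perm (Fin n)) (l : Fin (n - d + k) → ℕ),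
      IsSignVec ε ∧ ValidB n (n - d + k) l ∧ F = FaceB d n y ε σ (n - d + k) l) ∧ F ≠ {0}}

/-- The multiplicity `l_1!(l_2-l_1)!⋯(l_m-l_{m-1})!(n-l_m)!`. -/
def MultA (n m : ℕ) (l : Fin m → ℕ) : ℕ :=
  (∏ j : Fin m, Nat.factorial
      (l j - if _ : j.val = 0 then 0 else l ⟨j.val - 1, by have := j.isLt; omega⟩)) *
    (if h : 0 < m then Nat.factorial (n - l ⟨m - 1, by omega⟩) else Nat.factorial n)

/-- The multiplicity `l_1!(l_2-l_1)!⋯(l_m-l_{m-1})!(n-l_m)! 2^{n-l_m}`. -/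
def MultB (n m : ℕ) (l : Fin m → ℕ) : ℕ :=
  (∏ j : Fin m, Nat.factorial
      (l j - if _ : j.val = 0 then 0 else l ⟨j.val - 1, by have := j.isLt; omega⟩)) *
    (if h : 0 < m then Nat.factorial (n - l ⟨m - 1, by omega⟩) * 2 ^ (n - l ⟨m - 1, by omega⟩)
     else Nat.factorial n * 2 ^ n)

/-- The face `C^A_σ(l_1,…,l_m)` of a Weyl chamber of type `A_{n-1}` in `ℝ^n`. -/
def ChamberFaceA (n : ℕ) (σ : Equiv.Perm (Fin n)) (m : ℕ) (l : Fin m → ℕ) :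
    Set (EuclideanSpace ℝ (Fin n)) :=
  {β | (Monotone fun i : Fin n => β (σ i)) ∧
    ∀ (p : ℕ) (hp : p + 1 < n), (∀ j, l j ≠ p + 1) → β (σ ⟨p, by omega⟩) = β (σ ⟨p + 1, hp⟩)}

/-- The face `C^B_{ε,σ}(l_1,…,l_m)` of a Weyl chamber of type `B_n` in `ℝ^n`. -/
def ChamberFaceB (n : ℕ) (ε : Fin n → ℝ) (σ : Equiv.Perm (Fin n)) (m : ℕ) (l : Fin m → ℕ) :
    Set (EuclideanSpace ℝ (Fin n)) :=
  {β | (Monotone fun i : Fin n => ε i * β (σ i)) ∧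
    (∀ i : Fin n, ε i * β (σ i) ≤ 0) ∧
    (∀ (p : ℕ) (hp : p + 1 < n), (∀ j, l j ≠ p + 1) →
      ε ⟨p, by omega⟩ * β (σ ⟨p, by omega⟩) = ε ⟨p + 1, hp⟩ * β (σ ⟨p + 1, hp⟩)) ∧
    (∀ (p : ℕ) (hp : p < n), (∀ j, l j ≤ p) → β (σ ⟨p, hp⟩) = 0)}

/-- The linear subspace `L = {β ∈ ℝ^n : β_1 y_1 + ⋯ + β_n y_n = 0}`. -/
def Lspace (d n : ℕ) (y : Fin n → EuclideanSpace ℝ (Fin d)) :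
    Submodule ℝ (EuclideanSpace ℝ (Fin n)) where
  carrier := {β | ∑ i, β i • y i = 0}
  add_mem' := by
    intro a b ha hb
    simp only [Set.mem_setOf_eq] at *
    have h : ∀ i ∈ Finset.univ, (a + b) i • y i = a i • y i + b i • y i := by
      intro i _
      rw [PiLp.add_apply, add_smul]
    rw [Finset.sum_congr rfl h, Finset.sum_add_distrib, ha, hb, add_zero]
  zero_mem' := by
    simp only [Set.mem_setOf_eq]
    refine Finset.sum_eq_zero fun i _ => ?_
    rw [PiLp.zero_apply, zero_smul]
  smul_mem' := by
    intro c a ha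
    simp only [Set.mem_setOf_eq] at *
    have h : ∀ i ∈ Finset.univ, (c • a) i • y i = c • (a i • y i) := by
      intro i _
      rw [PiLp.smul_apply, smul_smul, smul_eq_mul]
    rw [Finset.sum_congr rfl h, ← Finset.smul_sum, ha, smul_zero]

/-- The hyperplane `{β ∈ ℝ^N : β_i = β_j}`. -/
def hypEq (N : ℕ) (i j : Fin N) : Submodule ℝ (EuclideanSpace ℝ (Fin N)) where
  carrier := {β | β i = β j}
  add_mem' := by
    intro a b ha hb
    simp only [Set.mem_setOf_eq, PiLp.add_apply] at *
    rw [ha, hb]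
  zero_mem' := by simp [Set.mem_setOf_eq]
  smul_mem' := by
    intro c a ha
    simp only [Set.mem_setOf_eq, PiLp.smul_apply] at *
    rw [ha]

/-- The hyperplane `{β ∈ ℝ^N : β_i = -β_j}`. -/
def hypOpp (N : ℕ) (i j : Fin N) : Submodule ℝ (EuclideanSpace ℝ (Fin N)) where
  carrier := {β | β i = -β j}
  add_mem' := by
    intro a b ha hb
    simp only [Set.mem_setOf_eq, PiLp.add_apply] at *
    rw [ha, hb, neg_add]
  zero_mem' := by simp [Set.mem_setOf_eq]
  smul_mem' := by
    intro c a ha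
    simp only [Set.mem_setOf_eq, PiLp.smul_apply] at *
    rw [ha, smul_neg]

/-- The hyperplane `{β ∈ ℝ^N : β_i = 0}`. -/
def hypZero (N : ℕ) (i : Fin N) : Submodule ℝ (EuclideanSpace ℝ (Fin N)) where
  carrier := {β | β i = 0}
  add_mem' := by
    intro a b ha hb
    simp only [Set.mem_setOf_eq, PiLp.add_apply] at *
    rw [ha, hb, add_zero]
  zero_mem' := by simp [Set.mem_setOf_eq]
  smul_mem' := by
    intro c a ha
    simp only [Set.mem_setOf_eq, PiLp.smul_apply] at *
    rw [ha, smul_zero]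

/-- The reflection arrangement `𝒜(A_{N-1})` in `ℝ^N`. -/
def ArrA (N : ℕ) : Set (Submodule ℝ (EuclideanSpace ℝ (Fin N))) :=
  {H | ∃ i j : Fin N, i < j ∧ H = hypEq N i j}

/-- The reflection arrangement `𝒜(B_N)` in `ℝ^N`. -/
def ArrB (N : ℕ) : Set (Submodule ℝ (EuclideanSpace ℝ (Fin N))) :=
  {H | (∃ i j : Fin N, i < j ∧ H = hypEq N i j) ∨
    (∃ i j : Fin N, i < j ∧ H = hypOpp N i j) ∨ ∃ i : Fin N, H = hypZero N i}

/-- Two linear subspaces `U`, `W` of `ℝ^N` are in general position if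
`dim (U ∩ W) = max {0, dim U + dim W - N}`. -/
def InGenPos (N : ℕ) (U W : Submodule ℝ (EuclideanSpace ℝ (Fin N))) : Prop :=
  Module.finrank ℝ ↥(U ⊓ W) = Module.finrank ℝ ↥U + Module.finrank ℝ ↥W - N

/-- A linear subspace `U` is in general position with respect to a hyperplane
arrangement `A` if it is in general position with respect to `⋂_{H ∈ B} H` for
every subset `B ⊆ A`. -/
def InGenPosArr (N : ℕ) (U : Submodule ℝ (EuclideanSpace ℝ (Fin N)))
    (A : Set (Submodule ℝ (EuclideanSpace ℝ (Fin N)))) : Prop :=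
  ∀ B ⊆ A, InGenPos N U (sInf B)

/-- The polyhedral cone `{v : ⟨x_1,v⟩ ≤ 0, …, ⟨x_m,v⟩ ≤ 0}`. -/
def PolyCone (d m : ℕ) (x : Fin m → EuclideanSpace ℝ (Fin d)) :
    Set (EuclideanSpace ℝ (Fin d)) :=
  {v | ∀ i, ⟪x i, v⟫ ≤ 0}

/-- The dual cone `C° = {v : ⟨x,v⟩ ≤ 0 ∀ x ∈ C}`. -/
def DualCone (d : ℕ) (C : Set (EuclideanSpace ℝ (Fin d))) :
    Set (EuclideanSpace ℝ (Fin d)) :=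
  {v | ∀ w ∈ C, ⟪w, v⟫ ≤ 0}

/-- The face of `D^B_{ε,σ}` obtained by replacing the inequalities at the (0-indexed)
positions in `E` by equalities. -/
def SubfaceB (d n : ℕ) (y : Fin n → EuclideanSpace ℝ (Fin d)) (ε : Fin n → ℝ)
    (σ : Equiv.Perm (Fin n)) (E : Set (Fin n)) : Set (EuclideanSpace ℝ (Fin d)) :=
  {v | v ∈ ConeB d n y ε σ ∧ ∀ i ∈ E,
    if h : (i : ℕ) + 1 < n then
      ε i * ⟪v, y (σ i)⟫ = ε ⟨(i : ℕ) + 1, h⟩ * ⟪v, y (σ ⟨(i : ℕ) + 1, h⟩)⟫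
    else ε i * ⟪v, y (σ i)⟫ = 0}

end

section AuxLemmas
open MeasureTheory

lemma gram_det_ne_zero_iff {ι : Type*} [Fintype ι] [DecidableEq ι] {d : ℕ}
    (v : ι → EuclideanSpace ℝ (Fin d)) :
    LinearIndependent ℝ v ↔ (Matrix.of fun i j => (⟪v i, v j⟫ : ℝ)).det ≠ 0 := by
  have hbr : ∀ (c : ι → ℝ) (i : ι),
      (Matrix.of fun i j => (⟪v i, v j⟫ : ℝ)).mulVec c i = ⟪v i, ∑ j, c j • v j⟫ := by
    intro c i
    rw [inner_sum, Matrix.mulVec, dotProduct]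
    refine Finset.sum_congr rfl fun j _ => ?_
    rw [real_inner_smul_right, Matrix.of_apply, mul_comm]
  have key : ∀ c : ι → ℝ, (Matrix.of fun i j => (⟪v i, v j⟫ : ℝ)).mulVec c = 0 ↔
      (∑ j, c j • v j) = 0 := by
    intro c
    constructor
    · intro hc
      have h1 : ∀ i, (⟪v i, ∑ j, c j • v j⟫ : ℝ) = 0 := by
        intro i
        rw [← hbr c i, hc]
        rfl
      have : (⟪∑ i, c i • v i, ∑ j, c j • v j⟫ : ℝ) = 0 := by
        rw [sum_inner]
        exact Finset.sum_eq_zero fun i _ => by rw [real_inner_smul_left, h1 i, mul_zero]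
      exact inner_self_eq_zero.mp this
    · intro hc
      funext i
      rw [hbr c i, hc, inner_zero_right]
      rfl
  constructor
  · intro h hdet
    obtain ⟨c, hc0, hc⟩ := Matrix.exists_mulVec_eq_zero_iff.mpr hdet
    have := Fintype.linearIndependent_iff.mp h c ((key c).mp hc)
    exact hc0 (funext fun i => this i)
  · intro hdet
    by_contra hdep
    obtain ⟨c, hsum, i0, hi0⟩ := Fintype.not_linearIndependent_iff.mp hdep
    exact hdet (Matrix.exists_mulVec_eq_zero_iff.mp
      ⟨c, fun h => hi0 (by rw [h]; rfl), (key c).mpr hsum⟩)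

lemma continuous_diffB (d n : ℕ) (ε : Fin n → ℝ) (σ : Equiv.Perm (Fin n)) (i : Fin n) :
    Continuous fun y : Fin n → EuclideanSpace ℝ (Fin d) => diffB d n y ε σ i := by
  unfold diffB
  split_ifs with h
  · fun_prop
  · fun_prop

lemma measurable_badSet (d n : ℕ) (ε : Fin n → ℝ) (σ : Equiv.Perm (Fin n))
    (s : Finset (Fin n)) :
    MeasurableSet {y : Fin n → EuclideanSpace ℝ (Fin d) |
      ¬LinearIndependent ℝ (fun i : s => diffB d n y ε σ i.1)} := by
  have heq : {y : Fin n → EuclideanSpace ℝ (Fin d) |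
      ¬LinearIndependent ℝ (fun i : s => diffB d n y ε σ i.1)} =
      (fun y : Fin n → EuclideanSpace ℝ (Fin d) =>
        (Matrix.of fun i j : s => (⟪diffB d n y ε σ i.1, diffB d n y ε σ j.1⟫ : ℝ)).det)
        ⁻¹' {0} := by
    ext y
    simp only [Set.mem_setOf_eq, Set.mem_preimage, Set.mem_singleton_iff,
      gram_det_ne_zero_iff, not_not]
  rw [heq]
  refine (Continuous.measurable ?_) (measurableSet_singleton 0)
  exact Continuous.matrix_det (continuous_matrix fun i j =>
    (continuous_diffB d n ε σ i.1).inner (continuous_diffB d n ε σ j.1))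

lemma pi_unique_eq_map {ι : Type*} [Fintype ι] [Unique ι] {β : Type*} [MeasurableSpace β]
    (μ : Measure β) [SigmaFinite μ] :
    Measure.pi (fun _ : ι => μ) = Measure.map (fun x : β => (fun _ : ι => x)) μ := by
  refine Measure.pi_eq fun s hs => ?_
  have hmeas : Measurable fun x : β => (fun _ : ι => x) := by
    exact measurable_pi_lambda _ fun _ => measurable_id
  rw [Measure.map_apply hmeas (MeasurableSet.univ_pi hs)]
  have hpre : (fun x : β => (fun _ : ι => x)) ⁻¹' Set.univ.pi s = s default := by
    ext x
    simp only [Set.mem_preimage, Set.mem_pi, Set.mem_univ, forall_true_left]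
    constructor
    · intro hx; exact hx default
    · intro hx i; rwa [Unique.eq_default i]
  rw [hpre, Fintype.prod_unique]

lemma pi_unique_null {ι : Type*} [Fintype ι] [Unique ι] {β : Type*} [MeasurableSpace β]
    (μ : Measure β) [SigmaFinite μ] (S : Set (ι → β)) (hSm : MeasurableSet S)
    (h : μ {x : β | (fun _ : ι => x) ∈ S} = 0) :
    Measure.pi (fun _ : ι => μ) S = 0 := by
  have hmeas : Measurable fun x : β => (fun _ : ι => x) := by
    exact measurable_pi_lambda _ fun _ => measurable_id
  rw [pi_unique_eq_map, Measure.map_apply hmeas hSm]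
  exact h

lemma slice_null {d n : ℕ} (μ : Measure (EuclideanSpace ℝ (Fin d))) [SigmaFinite μ]
    (j0 : Fin n) (A : Set (Fin n → EuclideanSpace ℝ (Fin d))) (hA : MeasurableSet A)
    (h : ∀ r : Fin n → EuclideanSpace ℝ (Fin d), μ {x | Function.update r j0 x ∈ A} = 0) :
    Measure.pi (fun _ : Fin n => μ) A = 0 := by
  classical
  set p : Fin n → Prop := fun i => i = j0 with hp
  haveI hUniq : Unique (Subtype p) := ⟨⟨⟨j0, rfl⟩⟩, fun x => Subtype.ext x.2⟩
  set e := MeasurableEquiv.piEquivPiSubtypeProd (fun _ : Fin n => EuclideanSpace ℝ (Fin d)) p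
    with he
  have hmp := measurePreserving_piEquivPiSubtypeProd (fun _ : Fin n => μ) p
  set B := e.symm ⁻¹' A with hB
  have hBm : MeasurableSet B := e.symm.measurable hA
  have hAB : A = e ⁻¹' B := by ext z; simp [hB]
  rw [hAB, hmp.measure_preimage hBm.nullMeasurableSet]
  rw [← Measure.prod_swap, Measure.map_apply measurable_swap hBm]
  rw [Measure.measure_prod_null (measurable_swap hBm)]
  refine Filter.Eventually.of_forall fun r => ?_
  simp only [Pi.zero_apply]
  have hsec : (Prod.mk r ⁻¹' (Prod.swap ⁻¹' B)) =
      {x1 : (Subtype p) → EuclideanSpace ℝ (Fin d) | e.symm (x1, r) ∈ A} := by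
    ext x1
    simp [hB, Prod.swap]
  rw [hsec]
  set r' : Fin n → EuclideanSpace ℝ (Fin d) := fun i => if h : ¬ p i then r ⟨i, h⟩ else 0
    with hr'
  have hkey : ∀ x : EuclideanSpace ℝ (Fin d),
      e.symm ((fun _ => x), r) = Function.update r' j0 x := by
    intro x
    funext i
    have hsymm : e.symm ((fun _ => x), r) i =
        if h : p i then (fun _ : (Subtype p) => x) ⟨i, h⟩ else r ⟨i, h⟩ := rfl
    rw [hsymm, Function.update]
    by_cases hi : i = j0
    · subst hi; simp [hp]
    · simp [hp, hi, hr']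
  refine @pi_unique_null (Subtype p) (Subtype.fintype p) hUniq _ _ μ _ _ ?_ ?_
  · have hm : Measurable fun x1 : (Subtype p) → EuclideanSpace ℝ (Fin d) =>
        e.symm (x1, r) :=
      e.symm.measurable.comp (measurable_id.prod measurable_const)
    exact hm hA
  · have hset : {x : EuclideanSpace ℝ (Fin d) |
        (fun _ : Subtype p => x) ∈ {x1 : (Subtype p) → EuclideanSpace ℝ (Fin d) |
          e.symm (x1, r) ∈ A}} = {x | Function.update r' j0 x ∈ A} := by
      ext x
      simp only [Set.mem_setOf_eq, hkey]
    rw [hset]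
    exact h r'

lemma exists_superspace {d : ℕ} (W : Submodule ℝ (EuclideanSpace ℝ (Fin d))) (m : ℕ)
    (h1 : Module.finrank ℝ W ≤ m) (h2 : m ≤ d) :
    ∃ W' : Submodule ℝ (EuclideanSpace ℝ (Fin d)), W ≤ W' ∧ Module.finrank ℝ W' = m := by
  induction m with
  | zero => exact ⟨W, le_rfl, Nat.le_zero.mp h1⟩
  | succ m ih =>
    by_cases hc : Module.finrank ℝ W ≤ m
    · obtain ⟨W', hWW', hfr⟩ := ih hc (le_trans (Nat.le_succ m) h2)
      have hlt : Module.finrank ℝ W' < Module.finrank ℝ (EuclideanSpace ℝ (Fin d)) := by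
        rw [finrank_euclideanSpace_fin]; omega
      obtain ⟨x, hx⟩ := Submodule.exists_of_finrank_lt W' hlt
      have hxW : x ∉ W' := by simpa using hx 1 one_ne_zero
      have hx0 : x ≠ 0 := fun h => hxW (h ▸ W'.zero_mem)
      refine ⟨W' ⊔ Submodule.span ℝ {x}, le_trans hWW' le_sup_left, ?_⟩
      have hdisj : W' ⊓ Submodule.span ℝ {x} = ⊥ := by
        rw [Submodule.eq_bot_iff]
        rintro z hz
        rw [Submodule.mem_inf] at hz
        obtain ⟨hz1, hz2⟩ := hz
        obtain ⟨r, rfl⟩ := Submodule.mem_span_singleton.mp hz2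
        rcases eq_or_ne r 0 with hr | hr
        · rw [hr, zero_smul]
        · exact absurd (by simpa [smul_smul, inv_mul_cancel₀ hr] using W'.smul_mem r⁻¹ hz1) hxW
      have hsum := Submodule.finrank_sup_add_finrank_inf_eq W' (Submodule.span ℝ {x})
      rw [hdisj, finrank_bot, finrank_span_singleton hx0] at hsum
      omega
    · exact ⟨W, le_rfl, by omega⟩

lemma affine_slice_null {d : ℕ} (hd : 2 ≤ d) (μ : Measure (EuclideanSpace ℝ (Fin d)))
    (hμ : ∀ s : AffineSubspace ℝ (EuclideanSpace ℝ (Fin d)),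
      Module.finrank ℝ s.direction = d - 1 → μ ↑s = 0)
    (a : ℝ) (ha : a ≠ 0) (c : EuclideanSpace ℝ (Fin d))
    (W : Submodule ℝ (EuclideanSpace ℝ (Fin d))) (hW : Module.finrank ℝ W ≤ d - 1)
    (S : Set (EuclideanSpace ℝ (Fin d))) (hS : S ⊆ {x | a • x - c ∈ W}) : μ S = 0 := by
  rcases S.eq_empty_or_nonempty with rfl | ⟨x0, hx0⟩
  · exact measure_empty
  obtain ⟨W', hWW', hW'⟩ := exists_superspace W (d - 1) hW (by omega)
  have hAS : μ ↑(AffineSubspace.mk' x0 W') = 0 :=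
    hμ _ (by rw [AffineSubspace.direction_mk']; exact hW')
  refine measure_mono_null ?_ hAS
  intro x hx
  have h1 : a • x - c ∈ W := hS hx
  have h0 : a • x0 - c ∈ W := hS hx0
  have hsub : a • (x - x0) ∈ W := by
    have := W.sub_mem h1 h0
    simpa [smul_sub] using this
  have hmem : x - x0 ∈ W := by
    have := W.smul_mem a⁻¹ hsub
    simpa [smul_smul, inv_mul_cancel₀ ha] using this
  have : x -ᵥ x0 ∈ W' := hWW' (by simpa using hmem)
  exact AffineSubspace.mem_mk'.mpr this

lemma diffB_eq_of_agree {d n : ℕ} (y y' : Fin n → EuclideanSpace ℝ (Fin d))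
    (ε : Fin n → ℝ) (σ : Equiv.Perm (Fin n)) (i : Fin n)
    (h1 : y (σ i) = y' (σ i))
    (h2 : ∀ h : i.val + 1 < n, y (σ ⟨i.val + 1, h⟩) = y' (σ ⟨i.val + 1, h⟩)) :
    diffB d n y ε σ i = diffB d n y' ε σ i := by
  unfold diffB
  split_ifs with h
  · rw [h1, h2 h]
  · rw [h1]

lemma badSet_null (d n : ℕ) (hd : 2 ≤ d) (μ : Measure (EuclideanSpace ℝ (Fin d)))
    [SigmaFinite μ]
    (hμ : ∀ s : AffineSubspace ℝ (EuclideanSpace ℝ (Fin d)),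
      Module.finrank ℝ s.direction = d - 1 → μ ↑s = 0)
    (ε : Fin n → ℝ) (hε : IsSignVec ε) (σ : Equiv.Perm (Fin n)) :
    ∀ (k : ℕ), k ≤ d → ∀ s : Finset (Fin n), s.card = k →
      Measure.pi (fun _ : Fin n => μ)
        {y : Fin n → EuclideanSpace ℝ (Fin d) |
          ¬LinearIndependent ℝ (fun i : s => diffB d n y ε σ i.1)} = 0 := by
  intro k
  induction k with
  | zero =>
    intro _ s hs
    rw [Finset.card_eq_zero] at hs
    subst hs
    haveI : IsEmpty ((∅ : Finset (Fin n)) : Set (Fin n)) :=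
      ⟨fun x => absurd x.2 (by simp)⟩
    have hset : {y : Fin n → EuclideanSpace ℝ (Fin d) |
        ¬LinearIndependent ℝ (fun i : (∅ : Finset (Fin n)) => diffB d n y ε σ i.1)} = ∅ := by
      ext y
      simp only [Set.mem_setOf_eq, Set.mem_empty_iff_false, iff_false, not_not]
      exact linearIndependent_empty_type
    rw [hset]
    exact measure_empty
  | succ k ih =>
    intro hk s hs
    have hsne : s.Nonempty := Finset.card_pos.mp (by omega)
    set i1 := s.min' hsne with hi1
    set s' := s.erase i1 with hs'def
    have hi1mem : i1 ∈ s := s.min'_mem hsne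
    have hs'card : s'.card = k := by
      rw [hs'def, Finset.card_erase_of_mem hi1mem, hs]
      omega
    have hbad' := ih (by omega) s' hs'card
    set Bads := {y : Fin n → EuclideanSpace ℝ (Fin d) |
      ¬LinearIndependent ℝ (fun i : s => diffB d n y ε σ i.1)} with hBadsDef
    set Bads' := {y : Fin n → EuclideanSpace ℝ (Fin d) |
      ¬LinearIndependent ℝ (fun i : s' => diffB d n y ε σ i.1)} with hBads'Def
    have hmBs : MeasurableSet Bads := measurable_badSet d n ε σ s
    have hmBs' : MeasurableSet Bads' := measurable_badSet d n ε σ s'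
    have hRnull : Measure.pi (fun _ : Fin n => μ) (Bads \ Bads') = 0 := by
      refine slice_null μ (σ i1) _ (hmBs.diff hmBs') ?_
      intro r
      classical
      set w : Fin n → EuclideanSpace ℝ (Fin d) := fun i => diffB d n r ε σ i with hw
      set W := Submodule.span ℝ ((s'.image w : Finset (EuclideanSpace ℝ (Fin d))) :
        Set (EuclideanSpace ℝ (Fin d))) with hWdef
      have hWrank : Module.finrank ℝ W ≤ d - 1 := by
        have h1 : Module.finrank ℝ W ≤ (s'.image w).card :=
          finrank_span_finset_le_card (s'.image w)
        have h2 : (s'.image w).card ≤ s'.card := Finset.card_image_le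
        omega
      set c : EuclideanSpace ℝ (Fin d) :=
        if h : (i1 : ℕ) + 1 < n then ε ⟨(i1 : ℕ) + 1, h⟩ • r (σ ⟨(i1 : ℕ) + 1, h⟩) else 0
        with hc
      have ha : ε i1 ≠ 0 := by
        rcases hε i1 with h | h <;> rw [h] <;> norm_num
      refine affine_slice_null hd μ hμ (ε i1) ha c W hWrank _ ?_
      intro x hx
      simp only [Set.mem_setOf_eq] at hx ⊢
      set y := Function.update r (σ i1) x with hy
      obtain ⟨hbad, hgood⟩ := hx
      rw [hBadsDef, Set.mem_setOf_eq] at hbad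
      rw [hBads'Def, Set.mem_setOf_eq] at hgood
      have hLI' : LinearIndependent ℝ (fun i : s' => diffB d n y ε σ i.1) := not_not.mp hgood
      have hne_i1 : ∀ i ∈ s', σ i ≠ σ i1 := by
        intro i hi
        simp only [ne_eq, EmbeddingLike.apply_eq_iff_eq]
        exact Finset.ne_of_mem_erase hi
      have hlt_i1 : ∀ i ∈ s', (i1 : ℕ) < (i : ℕ) := by
        intro i hi
        have h1 : i1 ≤ i := s.min'_le i (Finset.mem_of_mem_erase hi)
        have h2 : i ≠ i1 := Finset.ne_of_mem_erase hi
        have h3 : (i1 : ℕ) ≤ (i : ℕ) := h1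
        have h4 : (i : ℕ) ≠ (i1 : ℕ) := fun hcon => h2 (Fin.ext hcon)
        omega
      have hagree : ∀ i ∈ s', diffB d n y ε σ i = w i := by
        intro i hi
        refine diffB_eq_of_agree _ _ _ _ _ ?_ ?_
        · rw [hy, Function.update_of_ne (hne_i1 i hi)]
        · intro h
          have hne : σ ⟨(i : ℕ) + 1, h⟩ ≠ σ i1 := by
            simp only [ne_eq, EmbeddingLike.apply_eq_iff_eq, Fin.ext_iff]
            have := hlt_i1 i hi
            omega
          rw [hy, Function.update_of_ne hne]
      have hvi1 : diffB d n y ε σ i1 = ε i1 • x - c := by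
        unfold diffB
        rw [hc]
        split_ifs with h
        · have hx1 : y (σ i1) = x := by rw [hy, Function.update_self]
          have hne : σ ⟨(i1 : ℕ) + 1, h⟩ ≠ σ i1 := by
            simp only [ne_eq, EmbeddingLike.apply_eq_iff_eq, Fin.ext_iff]
            omega
          rw [hx1, hy, Function.update_of_ne hne]
        · rw [hy, Function.update_self, sub_zero]
      obtain ⟨g, hgsum, i0, hgi0⟩ := Fintype.not_linearIndependent_iff.mp hbad
      set G : Fin n → ℝ := fun i => if h : i ∈ s then g ⟨i, h⟩ else 0 with hG
      have hGval : ∀ i : {x // x ∈ s}, G i.1 = g i := by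
        intro i
        rw [hG]
        simp only [i.2, dif_pos]
      have hGsum : ∑ i ∈ s, G i • diffB d n y ε σ i = 0 := by
        rw [← Finset.sum_attach s (fun i => G i • diffB d n y ε σ i)]
        calc ∑ i ∈ s.attach, G i.1 • diffB d n y ε σ i.1
            = ∑ i ∈ s.attach, g i • diffB d n y ε σ i.1 :=
              Finset.sum_congr rfl fun i _ => by rw [hGval i]
          _ = 0 := by rw [← Finset.univ_eq_attach]; exact hgsum
      have hins : s = insert i1 s' := (Finset.insert_erase hi1mem).symm
      have hsplit : G i1 • diffB d n y ε σ i1 + ∑ i ∈ s', G i • diffB d n y ε σ i = 0 := by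
        have h1 : ∑ i ∈ insert i1 s', G i • diffB d n y ε σ i =
            G i1 • diffB d n y ε σ i1 + ∑ i ∈ s', G i • diffB d n y ε σ i :=
          Finset.sum_insert (show i1 ∉ s' from hs'def ▸ Finset.notMem_erase i1 s)
        rw [← h1, ← hins]
        exact hGsum
      have hGi1 : G i1 ≠ 0 := by
        intro hzero
        have hsum' : ∑ i ∈ s', G i • diffB d n y ε σ i = 0 := by
          rw [hzero, zero_smul, zero_add] at hsplit
          exact hsplit
        have hi0ne : (i0 : Fin n) ≠ i1 := by
          intro hcon
          apply hgi0
          have : G (i0 : Fin n) = g i0 := hGval i0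
          rw [← this, hcon, hzero]
        have hi0s' : (i0 : Fin n) ∈ s' := Finset.mem_erase.mpr ⟨hi0ne, i0.2⟩
        have : ¬LinearIndependent ℝ (fun i : s' => diffB d n y ε σ i.1) := by
          refine Fintype.not_linearIndependent_iff.mpr ⟨fun i => G i.1, ?_, ⟨⟨i0, hi0s'⟩, ?_⟩⟩
          · rw [Finset.univ_eq_attach, Finset.sum_attach s' (fun i => G i • diffB d n y ε σ i)]
            exact hsum'
          · show G (i0 : Fin n) ≠ 0
            rw [hGval i0]
            exact hgi0
        exact this hLI'
      -- main case : G i1 ≠ 0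
      have hsmem : G i1 • diffB d n y ε σ i1 ∈ W := by
        have hneg : G i1 • diffB d n y ε σ i1 = -∑ i ∈ s', G i • diffB d n y ε σ i :=
          eq_neg_of_add_eq_zero_left hsplit
        rw [hneg]
        refine Submodule.neg_mem _ (Submodule.sum_mem _ fun i hi => ?_)
        refine Submodule.smul_mem _ _ ?_
        rw [hagree i hi]
        exact Submodule.subset_span (Finset.mem_coe.mpr (Finset.mem_image_of_mem w hi))
      have hmem : diffB d n y ε σ i1 ∈ W := by
        have := W.smul_mem (G i1)⁻¹ hsmem
        rwa [smul_smul, inv_mul_cancel₀ hGi1, one_smul] at this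
      rw [← hvi1]
      exact hmem
    have hsubset : Bads ⊆ Bads' ∪ (Bads \ Bads') := by
      intro y hy
      by_cases h : y ∈ Bads'
      · exact Or.inl h
      · exact Or.inr ⟨hy, h⟩
    exact measure_mono_null hsubset (measure_union_null hbad' hRnull)

lemma condA1_of_condB1 {d n : ℕ} {y : Fin n → EuclideanSpace ℝ (Fin d)}
    (hB : CondB1 d n y) (hn1 : d + 1 ≤ n) : CondA1 d n y := by
  refine ⟨hn1, fun σ s hs => ?_⟩
  have hsign : IsSignVec (fun _ : Fin n => (1 : ℝ)) := fun _ => Or.inl rfl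
  have hemb : Function.Injective (fun i : Fin (n - 1) => (⟨i.val, by omega⟩ : Fin n)) := by
    intro a b hab
    simpa [Fin.ext_iff] using hab
  set e : Fin (n - 1) ↪ Fin n := ⟨fun i => ⟨i.val, by omega⟩, hemb⟩ with he
  have hcard : (s.map e).card = d := by rw [Finset.card_map, hs]
  have hLI := hB.2 (fun _ => 1) hsign σ (s.map e) hcard
  have hφinj : Function.Injective (fun i : {x // x ∈ s} =>
      (⟨e i.1, Finset.mem_map_of_mem e i.2⟩ : {x // x ∈ s.map e})) := by
    intro a b hab
    apply Subtype.ext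
    exact e.injective (Subtype.ext_iff.mp hab)
  have hLI2 := hLI.comp _ hφinj
  have hfun : ((fun i : {x // x ∈ s.map e} => diffB d n y (fun _ => 1) σ i.1) ∘
      (fun i : {x // x ∈ s} => (⟨e i.1, Finset.mem_map_of_mem e i.2⟩ : {x // x ∈ s.map e})))
      = fun i : {x // x ∈ s} => diffA d n y σ i.1 := by
    funext i
    show diffB d n y (fun _ => 1) σ (e i.1) = diffA d n y σ i.1
    have hlt : (e i.1).val + 1 < n := by
      have := i.1.isLt
      show (i.1 : ℕ) + 1 < n
      omega
    unfold diffB diffA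
    rw [dif_pos hlt]
    simp only [one_smul]
    rfl
  rwa [hfun] at hLI2

end AuxLemmas

open MeasureTheory in
/-- Lemma 5.1: if `μ` is a σ-finite Borel measure assigning measure zero to every affine
hyperplane, then `μ^{⊗n}`-almost every tuple satisfies (B1); consequently random vectors
whose joint law is absolutely continuous w.r.t. `μ^{⊗n}` satisfy (B1) a.s.
(and (A1) a.s. if `n ≥ d+1`). -/
theorem general_position_almost_surely (d n : ℕ) (hd : 2 ≤ d) (hn : d ≤ n)
    (μ : Measure (EuclideanSpace ℝ (Fin d))) [SigmaFinite μ]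
    (hμ : ∀ s : AffineSubspace ℝ (EuclideanSpace ℝ (Fin d)),
      Module.finrank ℝ s.direction = d - 1 → μ ↑s = 0) :
    Measure.pi (fun _ : Fin n => μ)
        {y : Fin n → EuclideanSpace ℝ (Fin d) | ¬CondB1 d n y} = 0 ∧
      ∀ (Ω : Type) (_ : MeasurableSpace Ω) (P : Measure Ω),
        IsProbabilityMeasure P →
        ∀ Y : Ω → Fin n → EuclideanSpace ℝ (Fin d), Measurable Y →
        Measure.map Y P ≪ Measure.pi (fun _ : Fin n => μ) →
        (∀ᵐ ω ∂P, CondB1 d n (Y ω)) ∧ (d + 1 ≤ n → ∀ᵐ ω ∂P, CondA1 d n (Y ω)) := by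
    classical
  set U : Set (Fin n → EuclideanSpace ℝ (Fin d)) :=
    ⋃ (b : Fin n → Bool), ⋃ (σ : Equiv.Perm (Fin n)),
      ⋃ (s : {s : Finset (Fin n) // s.card = d}),
        {y : Fin n → EuclideanSpace ℝ (Fin d) |
          ¬LinearIndependent ℝ
            (fun i : s.1 => diffB d n y (fun j => if b j then 1 else -1) σ i.1)} with hU
  have hsignb : ∀ b : Fin n → Bool, IsSignVec (fun j : Fin n => if b j then (1:ℝ) else -1) := by
    intro b j
    by_cases h : b j <;> simp [h]
  have hUnull : Measure.pi (fun _ : Fin n => μ) U = 0 := by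
    rw [hU]
    refine measure_iUnion_null fun b => measure_iUnion_null fun σ =>
      measure_iUnion_null fun s => ?_
    exact badSet_null d n hd μ hμ _ (hsignb b) σ d le_rfl s.1 s.2
  have hUm : MeasurableSet U := by
    rw [hU]
    exact MeasurableSet.iUnion fun b => MeasurableSet.iUnion fun σ =>
      MeasurableSet.iUnion fun s => measurable_badSet d n _ σ s.1
  have hsub : {y : Fin n → EuclideanSpace ℝ (Fin d) | ¬CondB1 d n y} ⊆ U := by
    intro y hy
    simp only [Set.mem_setOf_eq] at hy
    have hP : ¬ (∀ ε : Fin n → ℝ, IsSignVec ε → ∀ σ : Equiv.Perm (Fin n),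
        ∀ s : Finset (Fin n), s.card = d →
          LinearIndependent ℝ (fun i : s => diffB d n y ε σ i.1)) := by
      intro hcon
      exact hy ⟨hn, hcon⟩
    push_neg at hP
    obtain ⟨ε, hε, σ, s, hcard, hdep⟩ := hP
    set b : Fin n → Bool := fun i => if ε i = 1 then true else false with hb
    have hεb : (fun j : Fin n => if b j then (1:ℝ) else -1) = ε := by
      funext j
      rcases hε j with h | h
      · simp [hb, h]
      · simp [hb, h]
        exact fun hcon => absurd hcon (by norm_num)
    rw [hU]
    refine Set.mem_iUnion.mpr ⟨b, Set.mem_iUnion.mpr ⟨σ, Set.mem_iUnion.mpr ⟨⟨s, hcard⟩, ?_⟩⟩⟩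
    simp only [Set.mem_setOf_eq, hεb]
    exact hdep
  refine ⟨measure_mono_null hsub hUnull, ?_⟩
  intro Ω mΩ P hPprob Y hY habs
  have hmapU : Measure.map Y P U = 0 := habs hUnull
  have hpre : P (Y ⁻¹' U) = 0 := by
    rw [← Measure.map_apply hY hUm]
    exact hmapU
  have hB1 : ∀ᵐ ω ∂P, CondB1 d n (Y ω) := by
    rw [ae_iff]
    refine measure_mono_null ?_ hpre
    intro ω hω
    exact hsub hω
  refine ⟨hB1, fun hn1 => ?_⟩
  filter_upwards [hB1] with ω hω
  exact condA1_of_condB1 hω hn1
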